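/- There are no two distinct vertices U, V of a transportation polytope 𝒞(P,Q) such that supp(U) ⊊ supp(V) or supp(U) = supp(V); equivalently, every vertex of 𝒞(P,Q) is uniquely determined by its support, and the support of one vertex cannot strictly contain the support of another. -/

import Mathlib

open Finset Filter Topology

def IsProbVec {n : ℕ} (P : Fin n → ℝ) : Prop :=
  (∀ i, 0 ≤ P i) ∧ ∑ i, P i = 1

def supp {α : Type*} (P : α → ℝ) : Set α := {i | 0 < P i}

def supp2 {n m : ℕ} (S : Fin n → Fin m → ℝ) : Set (Fin n × Fin m) :=
  {p | 0 < S p.1 p.2}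

def Coupling {n m : ℕ} (P : Fin n → ℝ) (Q : Fin m → ℝ) : Set (Fin n → Fin m → ℝ) :=
  {S | (∀ i j, 0 ≤ S i j) ∧ (∀ i, ∑ j, S i j = P i) ∧ (∀ j, ∑ i, S i j = Q j)}

/-- Kullback-Leibler divergence of bivariate distributions, as a real-valued sum
(valid, with the convention `0 log 0 = 0`, whenever `supp2 T ⊆ supp2 S`). -/
noncomputable def D2 {n m : ℕ} (T S : Fin n → Fin m → ℝ) : ℝ :=
  ∑ i, ∑ j, T i j * Real.log (T i j / S i j)

/-- `T'` is an I-projection of `S` onto `𝒯`: it is absolutely continuous w.r.t. `S`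
(equivalently, `D(T'‖S) < ∞`) and minimizes the divergence among all such elements of `𝒯`
(elements with `¬ supp2 T ⊆ supp2 S` have infinite divergence). -/
def IsIProj {n m : ℕ} (S : Fin n → Fin m → ℝ) (𝒯 : Set (Fin n → Fin m → ℝ))
    (T' : Fin n → Fin m → ℝ) : Prop :=
  T' ∈ 𝒯 ∧ supp2 T' ⊆ supp2 S ∧ ∀ T ∈ 𝒯, supp2 T ⊆ supp2 S → D2 T' S ≤ D2 T S

noncomputable def prodDist {n m : ℕ} (P : Fin n → ℝ) (Q : Fin m → ℝ) :
    Fin n → Fin m → ℝ := fun i j => P i * Q j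

/-- KL divergence of univariate distributions. -/
noncomputable def Dv {n : ℕ} (P Q : Fin n → ℝ) : ℝ :=
  ∑ i, P i * Real.log (P i / Q i)

def GeomEquiv {n m : ℕ} (C1 C2 : Set (Fin n → Fin m → ℝ)) : Prop :=
  (∀ S ∈ C1, ∃ T ∈ C2, supp2 T = supp2 S) ∧ (∀ T ∈ C2, ∃ S ∈ C1, supp2 S = supp2 T)

lemma aux_t {α : Type*} (s : Finset α) (u v : α → ℝ)
    (hu : ∀ p ∈ s, 0 ≤ u p) (hv : ∀ p ∈ s, 0 ≤ v p)
    (h : ∀ p ∈ s, 0 < u p → 0 < v p) :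
    ∃ t : ℝ, 0 < t ∧ t ≤ 1 ∧ ∀ p ∈ s, t * u p ≤ v p := by
  classical
  induction s using Finset.induction with
  | empty => exact ⟨1, by norm_num, le_refl _, by simp⟩
  | @insert a s ha ih =>
    obtain ⟨t, ht0, ht1, htle⟩ := ih (fun p hp => hu p (Finset.mem_insert_of_mem hp))
      (fun p hp => hv p (Finset.mem_insert_of_mem hp))
      (fun p hp => h p (Finset.mem_insert_of_mem hp))
    rcases eq_or_lt_of_le (hu a (Finset.mem_insert_self a s)) with h0 | hpos
    · refine ⟨t, ht0, ht1, fun p hp => ?_⟩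
      rcases Finset.mem_insert.1 hp with rfl | hp
      · rw [← h0]; simpa using hv p (Finset.mem_insert_self p s)
      · exact htle p hp
    · have hva := h a (Finset.mem_insert_self a s) hpos
      refine ⟨min t (v a / u a), lt_min ht0 (div_pos hva hpos), (min_le_left _ _).trans ht1,
        fun p hp => ?_⟩
      rcases Finset.mem_insert.1 hp with rfl | hp
      · calc min t (v p / u p) * u p ≤ (v p / u p) * u p :=
              mul_le_mul_of_nonneg_right (min_le_right _ _) (le_of_lt hpos)
          _ = v p := by field_simp
      · calc min t (v a / u a) * u p ≤ t * u p :=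
              mul_le_mul_of_nonneg_right (min_le_left _ _)
                (hu p (Finset.mem_insert_of_mem hp))
          _ ≤ v p := htle p hp

theorem stmt7 {n m : ℕ} (P : Fin n → ℝ) (Q : Fin m → ℝ)
    (hP : IsProbVec P) (hQ : IsProbVec Q)
    (U V : Fin n → Fin m → ℝ)
    (hU : U ∈ (Coupling P Q).extremePoints ℝ) (hV : V ∈ (Coupling P Q).extremePoints ℝ)
    (hsupp : supp2 U ⊆ supp2 V) : U = V := by
  obtain ⟨hUmem, -⟩ := hU
  obtain ⟨hVmem, hVext⟩ := hV
  obtain ⟨hU0, hUr, hUc⟩ := hUmem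
  obtain ⟨hV0, hVr, hVc⟩ := hVmem
  have hsupp' : ∀ i j, 0 < U i j → 0 < V i j := fun i j h =>
    hsupp (show (0:ℝ) < U (i,j).1 (i,j).2 from h)
  obtain ⟨t, ht0, ht1, htle⟩ := aux_t (Finset.univ : Finset (Fin n × Fin m))
    (fun p => U p.1 p.2) (fun p => V p.1 p.2)
    (fun p _ => hU0 p.1 p.2) (fun p _ => hV0 p.1 p.2)
    (fun p _ h => hsupp' p.1 p.2 h)
  have htle' : ∀ i j, t * U i j ≤ V i j := fun i j => htle (i, j) (Finset.mem_univ _)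
  set A : Fin n → Fin m → ℝ := fun i j => (1 + t) * V i j - t * U i j with hAdef
  set B : Fin n → Fin m → ℝ := fun i j => (1 - t) * V i j + t * U i j with hBdef
  have hA : A ∈ Coupling P Q := by
    refine ⟨fun i j => ?_, fun i => ?_, fun j => ?_⟩
    · have h1 := htle' i j
      have h2 := mul_nonneg (le_of_lt ht0) (hV0 i j)
      simp only [hAdef]; nlinarith
    · simp only [hAdef, Finset.sum_sub_distrib, ← Finset.mul_sum, hUr, hVr]; ring
    · simp only [hAdef, Finset.sum_sub_distrib, ← Finset.mul_sum, hUc, hVc]; ring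
  have hB : B ∈ Coupling P Q := by
    refine ⟨fun i j => ?_, fun i => ?_, fun j => ?_⟩
    · have h1 := mul_nonneg (sub_nonneg.2 ht1) (hV0 i j)
      have h2 := mul_nonneg (le_of_lt ht0) (hU0 i j)
      simp only [hBdef]; nlinarith
    · simp only [hBdef, Finset.sum_add_distrib, ← Finset.mul_sum, hUr, hVr]; ring
    · simp only [hBdef, Finset.sum_add_distrib, ← Finset.mul_sum, hUc, hVc]; ring
  have hseg : V ∈ openSegment ℝ A B := by
    refine ⟨1/2, 1/2, by norm_num, by norm_num, by norm_num, ?_⟩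
    funext i j
    simp only [Pi.add_apply, Pi.smul_apply, smul_eq_mul, hAdef, hBdef]
    ring
  have hAV : A = V := hVext hA hB hseg
  funext i j
  have := congrFun (congrFun hAV i) j
  simp only [hAdef] at this
  nlinarith
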